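/- A pair of disjoint subsets (R⁺, R⁻) of a domain D (with D disjoint from heads of P) is an inconsistency reason of a normal propositional program P wrt. D if and only if for every classical model M of P, either (i) R⁺ ⊄ M, or (ii) there exists a nonempty unfounded set U of P wrt. M such that U ∩ M ≠ ∅ and U ∩ (D \ R⁻) = ∅. -/

import Mathlib

structure Rule (Atom : Type) where
  head : Atom
  pbody : Set Atom
  nbody : Set Atom

def satRule {Atom : Type} (I : Set Atom) (r : Rule Atom) : Prop :=
  r.pbody ⊆ I ∧ r.nbody ∩ I = ∅ → r.head ∈ I

def isModel {Atom : Type} (I : Set Atom) (P : Set (Rule Atom)) : Prop :=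
  ∀ r ∈ P, satRule I r

def reduct {Atom : Type} (P : Set (Rule Atom)) (I : Set Atom) : Set (Rule Atom) :=
  {r' | ∃ r ∈ P, r.nbody ∩ I = ∅ ∧ r' = Rule.mk r.head r.pbody ∅}

def isAnswerSet {Atom : Type} (P : Set (Rule Atom)) (I : Set Atom) : Prop :=
  isModel I (reduct P I) ∧ ∀ J, isModel J (reduct P I) → I ⊆ J

def facts {Atom : Type} (F : Set Atom) : Set (Rule Atom) :=
  {r | ∃ a ∈ F, r = Rule.mk a ∅ ∅}

def isUnfounded {Atom : Type} (P : Set (Rule Atom)) (M U : Set Atom) : Prop :=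
  ∀ r ∈ P, r.head ∈ U →
    ((∃ b ∈ r.pbody, b ∉ M) ∨ (∃ b ∈ r.nbody, b ∈ M) ∨ (∃ b ∈ r.pbody, b ∉ M \ U))

theorem stmt10 {Atom : Type} (P : Set (Rule Atom)) (D Rp Rm : Set Atom)
    (hHD : ∀ r ∈ P, r.head ∉ D)
    (hRp : Rp ⊆ D) (hRm : Rm ⊆ D) (hdisj : Rp ∩ Rm = ∅) :
    (∀ F, F ⊆ D → Rp ⊆ F → Rm ∩ F = ∅ → ¬ ∃ I, isAnswerSet (P ∪ facts F) I) ↔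
      ∀ M, isModel M P →
        (¬ Rp ⊆ M ∨ ∃ U : Set Atom, U.Nonempty ∧ isUnfounded P M U ∧
           (U ∩ M).Nonempty ∧ U ∩ (D \ Rm) = ∅) := by
  constructor
  · intro hLHS M hM
    by_cases hRpM : Rp ⊆ M
    · right
      set F : Set Atom := (M ∩ D) \ Rm with hF
      have hFD : F ⊆ D := fun a ha => ha.1.2
      have hFM : F ⊆ M := fun a ha => ha.1.1
      have hRpF : Rp ⊆ F := fun a ha =>
        ⟨⟨hRpM ha, hRp ha⟩, fun hm => (Set.eq_empty_iff_forall_notMem.mp hdisj a) ⟨ha, hm⟩⟩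
      have hRmF : Rm ∩ F = ∅ :=
        Set.eq_empty_iff_forall_notMem.mpr (fun a h => h.2.2 h.1)
      have hno := hLHS F hFD hRpF hRmF
      have hMP' : isModel M (P ∪ facts F) := by
        intro r hr
        rcases hr with h | h
        · exact hM r h
        · obtain ⟨a, ha, rfl⟩ := h
          intro _
          exact hFM ha
      have hMred : isModel M (reduct (P ∪ facts F) M) := by
        rintro r' ⟨r, hr, hnb, rfl⟩
        rintro ⟨hpb, -⟩
        exact hMP' r hr ⟨hpb, hnb⟩
      have hex : ¬ ∀ K, isModel K (reduct (P ∪ facts F) M) → M ⊆ K := by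
        intro h; exact hno ⟨M, hMred, h⟩
      push_neg at hex
      obtain ⟨K, hK, hMK⟩ := hex
      obtain ⟨m, hmM, hmK⟩ := Set.not_subset.mp hMK
      have hmU : m ∈ M \ (M ∩ K) := ⟨hmM, fun h => hmK h.2⟩
      refine ⟨M \ (M ∩ K), ⟨m, hmU⟩, ?_, ⟨m, hmU, hmM⟩, ?_⟩
      · intro r hr hhead
        by_contra hcon
        push_neg at hcon
        obtain ⟨h1, h2, h3⟩ := hcon
        have hpbM : r.pbody ⊆ M := h1
        have hnbM : r.nbody ∩ M = ∅ :=
          Set.eq_empty_iff_forall_notMem.mpr (fun b hb => h2 b hb.1 hb.2)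
        have hpbK : r.pbody ⊆ K := by
          intro b hb
          have hb' := h3 b hb
          by_contra hbK
          exact hb'.2 ⟨hb'.1, fun h => hbK h.2⟩
        have hred : Rule.mk r.head r.pbody ∅ ∈ reduct (P ∪ facts F) M :=
          ⟨r, Or.inl hr, hnbM, rfl⟩
        have hhK : r.head ∈ K := hK (Rule.mk r.head r.pbody ∅) hred ⟨hpbK, by simp⟩
        have hhM : r.head ∈ M := hM r hr ⟨hpbM, hnbM⟩
        exact hhead.2 ⟨hhM, hhK⟩
      · apply Set.eq_empty_iff_forall_notMem.mpr
        rintro a ⟨⟨haM, haU⟩, haD, haRm⟩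
        have haF : a ∈ F := ⟨⟨haM, haD⟩, haRm⟩
        have hred : Rule.mk a (∅ : Set Atom) ∅ ∈ reduct (P ∪ facts F) M :=
          ⟨Rule.mk a ∅ ∅, Or.inr ⟨a, haF, rfl⟩, by simp, rfl⟩
        have haK : a ∈ K := hK _ hred ⟨by simp, by simp⟩
        exact haU ⟨haM, haK⟩
    · left; exact hRpM
  · rintro hRHS F hFD hRpF hRmF ⟨I, hIred, hImin⟩
    have hFI : F ⊆ I := by
      intro a ha
      have hred : Rule.mk a (∅ : Set Atom) ∅ ∈ reduct (P ∪ facts F) I :=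
        ⟨Rule.mk a ∅ ∅, Or.inr ⟨a, ha, rfl⟩, by simp, rfl⟩
      exact hIred _ hred ⟨by simp, by simp⟩
    have hIP : isModel I P := by
      rintro r hr ⟨hpb, hnb⟩
      exact hIred (Rule.mk r.head r.pbody ∅) ⟨r, Or.inl hr, hnb, rfl⟩ ⟨hpb, by simp⟩
    rcases hRHS I hIP with h | ⟨U, hUne, hUunf, hUI, hUDR⟩
    · exact h (fun a ha => hFI (hRpF ha))
    · have hUF : ∀ a ∈ F, a ∉ U := by
        intro a haF haU
        have : a ∈ U ∩ (D \ Rm) :=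
          ⟨haU, hFD haF, fun h => Set.eq_empty_iff_forall_notMem.mp hRmF a ⟨h, haF⟩⟩
        rw [hUDR] at this; exact this
      have hJ : isModel (I \ U) (reduct (P ∪ facts F) I) := by
        rintro r' ⟨r, hr, hnb, rfl⟩
        rintro ⟨hpb, -⟩
        rcases hr with hr | hr
        · have hpbI : r.pbody ⊆ I := fun b hb => (hpb hb).1
          have hhI : r.head ∈ I := hIred (Rule.mk r.head r.pbody ∅) ⟨r, Or.inl hr, hnb, rfl⟩ ⟨hpbI, by simp⟩
          refine ⟨hhI, fun hhU => ?_⟩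
          rcases hUunf r hr hhU with ⟨b, hb, hbM⟩ | ⟨b, hb, hbM⟩ | ⟨b, hb, hbM⟩
          · exact hbM (hpb hb).1
          · exact Set.eq_empty_iff_forall_notMem.mp hnb b ⟨hb, hbM⟩
          · exact hbM (hpb hb)
        · obtain ⟨a, haF, rfl⟩ := hr
          exact ⟨hFI haF, hUF a haF⟩
      obtain ⟨x, hxU, hxI⟩ := hUI
      exact (hImin _ hJ hxI).2 hxU
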